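/- Let G be a profinite group (compact Hausdorff totally disconnected topological group) and A a profinite G-module (a G-module that is compact, Hausdorff and totally disconnected). Then A admits a presentation A ≅ lim_r A_r as an inverse limit, over a directed poset R, of finite discrete G-modules A_r with G-equivariant transition homomorphisms. Moreover, fixing n ≥ 1 and such a presentation with projections φ_r : A → A_r, if each A_r is evenly continuous with respect to G^{n-1}, then the map Θ_n : H^n_cts(G,A)_po → lim_r H^n_cts(G,A_r)_po, [a] ↦ ([φ_r ∘ a])_r, is a continuous bijection, and it is a homeomorphism if A is evenly continuous with respect to G^n. -/

import Mathlib

/-- A set `F` of maps `B → A` is evenly continuous. -/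
def EvenlyContinuousSet {B A : Type} [TopologicalSpace B] [TopologicalSpace A]
    (F : Set (B → A)) : Prop :=
  ∀ b : B, ∀ a : A, ∀ U ∈ nhds a, ∃ V ∈ nhds b, ∃ W ∈ nhds a,
    ∀ f ∈ F, f b ∈ W → ∀ v ∈ V, f v ∈ U

/-- The differential `d_{n+1} : M(G^n, A) → M(G^{n+1}, A)` of continuous group
cohomology (in the paper's indexing, `dmap ac n` is `d_{n+1}`). -/
def dmap {G A : Type} [Group G] [AddCommGroup A] (ac : G → A → A) (n : ℕ)
    (f : (Fin n → G) → A) : (Fin (n + 1) → G) → A :=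
  fun s =>
    ac (s 0) (f fun j => s j.succ)
      + (∑ i : Fin n, ((-1 : ℤ) ^ ((i : ℕ) + 1)) •
          f (fun j => if (j : ℕ) < (i : ℕ) then s j.castSucc
            else if (j : ℕ) = (i : ℕ) then s j.castSucc * s j.succ
            else s j.succ))
      + ((-1 : ℤ) ^ (n + 1)) • f (fun j => s j.castSucc)

/-- `Z^{m+1}_cts(G,A)_po = ker d_{m+2}` with the point-open topology. -/
abbrev Zcts {G A : Type} [Group G] [TopologicalSpace G] [AddCommGroup A]
    [TopologicalSpace A] (ac : G → A → A) (m : ℕ) : Type :=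
  {a : (Fin (m + 1) → G) → A // Continuous a ∧ ∀ s, dmap ac (m + 1) a s = 0}

/-- Two continuous `(m+1)`-cocycles are cohomologous if they differ by a coboundary
`d_{m+1} f` with `f : G^m → A` continuous. -/
def CohomologousN {G A : Type} [Group G] [TopologicalSpace G] [AddCommGroup A]
    [TopologicalSpace A] (ac : G → A → A) (m : ℕ) (a b : Zcts ac m) : Prop :=
  ∃ f : (Fin m → G) → A, Continuous f ∧ ∀ s, b.val s = a.val s + dmap ac m f s

/-- The open `G`-stable subgroups of `A`: these index the canonical presentation of a
profinite `G`-module as an inverse limit of finite discrete `G`-modules. -/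
abbrev StableOpen {G A : Type} [AddCommGroup A] [TopologicalSpace A]
    (ac : G → A → A) : Type :=
  {U : AddSubgroup A // IsOpen (U : Set A) ∧ ∀ (s : G) (x : A), x ∈ U → ac s x ∈ U}


set_option linter.unusedSectionVars false
set_option maxHeartbeats 1000000

section dlem
variable {G A B : Type} [Group G] [AddCommGroup A] [AddCommGroup B]

lemma dmap_comm_hom (ac : G → A → A) (ac' : G → B → B) (φ : A →+ B)
    (hφ : ∀ s x, φ (ac s x) = ac' s (φ x)) (n : ℕ) (f : (Fin n → G) → A) (s : Fin (n+1) → G) :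
    φ (dmap ac n f s) = dmap ac' n (fun x => φ (f x)) s := by
  simp [dmap, hφ, map_add, map_zsmul, map_sum]

lemma dmap_comm_fun (ac : G → A → A) (ac' : G → B → B) (φ : A → B)
    (hadd : ∀ x y : A, φ (x+y) = φ x + φ y)
    (hφ : ∀ (s : G) (x : A), φ (ac s x) = ac' s (φ x)) (n : ℕ)
    (f : (Fin n → G) → A) (s : Fin (n+1) → G) :
    φ (dmap ac n f s) = dmap ac' n (fun x => φ (f x)) s := by
  have h := dmap_comm_hom ac ac' (AddMonoidHom.mk' φ hadd) (fun t x => hφ t x) n f s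
  simpa using h

lemma dmap_add (ac : G → A → A) (hdist : ∀ (s : G) (x y : A), ac s (x+y) = ac s x + ac s y)
    (n : ℕ) (f g : (Fin n → G) → A) (s : Fin (n+1) → G) :
    dmap ac n (fun x => f x + g x) s = dmap ac n f s + dmap ac n g s := by
  simp only [dmap, hdist, smul_add, Finset.sum_add_distrib]; abel

lemma dmap_neg (ac : G → A → A) (hdist : ∀ (s : G) (x y : A), ac s (x+y) = ac s x + ac s y)
    (n : ℕ) (f : (Fin n → G) → A) (s : Fin (n+1) → G) :
    dmap ac n (fun x => - f x) s = - dmap ac n f s := by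
  have := dmap_comm_hom ac ac (negAddMonoidHom) (fun t x => by
    simp only [negAddMonoidHom, AddMonoidHom.coe_mk, ZeroHom.coe_mk]
    exact ((AddMonoidHom.mk' (ac t) (hdist t)).map_neg x).symm) n f s
  simp only [negAddMonoidHom, AddMonoidHom.coe_mk, ZeroHom.coe_mk] at this
  exact this.symm

lemma dmap_zero (ac : G → A → A) (hdist : ∀ (s : G) (x y : A), ac s (x+y) = ac s x + ac s y)
    (n : ℕ) (s : Fin (n+1) → G) :
    dmap ac n (fun _ => (0 : A)) s = 0 := by
  have h0 : ∀ (t : G), ac t 0 = 0 := fun t => (AddMonoidHom.mk' (ac t) (hdist t)).map_zero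
  simp [dmap, h0]

variable [TopologicalSpace G] [IsTopologicalGroup G] [TopologicalSpace A] [IsTopologicalAddGroup A]

lemma dmap_continuous (ac : G → A → A) (hac : Continuous fun p : G × A => ac p.1 p.2)
    (n : ℕ) (f : (Fin n → G) → A) (hf : Continuous f) : Continuous (dmap ac n f) := by
  refine Continuous.add (Continuous.add ?_ ?_) ?_
  · have h1 : Continuous fun s' : Fin (n+1) → G => ((s' 0 : G), f fun j => s' j.succ) :=
      (continuous_apply _).prodMk (hf.comp (continuous_pi fun j => continuous_apply _))
    exact hac.comp h1
  · refine continuous_finset_sum _ fun i _ => (continuous_zsmul _).comp (hf.comp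
      (continuous_pi fun j => ?_))
    by_cases h1 : (j : ℕ) < (i : ℕ)
    · simp only [if_pos h1]; exact continuous_apply _
    · simp only [if_neg h1]
      by_cases h2 : (j : ℕ) = (i : ℕ)
      · simp only [if_pos h2]; exact (continuous_apply _).mul (continuous_apply _)
      · simp only [if_neg h2]; exact continuous_apply _
  · exact (continuous_zsmul _).comp (hf.comp (continuous_pi fun j => continuous_apply _))

omit [TopologicalSpace G] [IsTopologicalGroup G] in
lemma dmap_eval_continuous (ac : G → A → A) (hac : ∀ t : G, Continuous (ac t))
    (n : ℕ) (s : Fin (n+1) → G) :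
    Continuous (fun f : (Fin n → G) → A => dmap ac n f s) := by
  refine Continuous.add (Continuous.add ?_ ?_) ?_
  · exact (hac _).comp (continuous_apply _)
  · exact continuous_finset_sum _ fun i _ => (continuous_zsmul _).comp (continuous_apply _)
  · exact (continuous_zsmul _).comp (continuous_apply _)
end dlem

lemma closure_continuous_of_evenlyContinuous {B A : Type} [TopologicalSpace B]
    [TopologicalSpace A] [RegularSpace A]
    (h : ∀ b : B, ∀ a : A, ∀ U ∈ nhds a, ∃ V ∈ nhds b, ∃ W ∈ nhds a,
      ∀ f : B → A, Continuous f → f b ∈ W → ∀ v ∈ V, f v ∈ U)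
    (g : B → A) (hg : g ∈ closure {f : B → A | Continuous f}) : Continuous g := by
  rw [continuous_iff_continuousAt]
  intro b
  intro U' hU'
  -- find closed nbhd U ⊆ U' of g b
  obtain ⟨U, hUmem, hUclosed, hUsub⟩ := exists_mem_nhds_isClosed_subset hU'
  obtain ⟨V, hV, W, hW, hVW⟩ := h b (g b) U hUmem
  obtain ⟨Wo, hWoW, hWoopen, hWomem⟩ := mem_nhds_iff.mp hW
  rw [Filter.mem_map]
  refine Filter.mem_of_superset hV ?_
  intro v hv
  -- g v ∈ closure U = U
  have : g v ∈ closure U := by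
    rw [mem_closure_iff]
    intro o ho hgvo
    -- two point approximation
    have hopen : IsOpen {f : B → A | f b ∈ Wo ∧ f v ∈ o} := by
      have := ((continuous_apply (A := fun _ : B => A) b).isOpen_preimage Wo hWoopen).inter
        ((continuous_apply (A := fun _ : B => A) v).isOpen_preimage o ho)
      exact this
    have hmemg : g ∈ {f : B → A | f b ∈ Wo ∧ f v ∈ o} := ⟨hWomem, hgvo⟩
    obtain ⟨f, hf1, hf2⟩ := _root_.mem_closure_iff.mp hg _ hopen hmemg
    exact ⟨f v, hf1.2, hVW f hf2 (hWoW hf1.1) v hv⟩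
  exact hUsub (hUclosed.closure_eq ▸ this)

lemma isClosed_cts {B A : Type} [TopologicalSpace B] [TopologicalSpace A] [RegularSpace A]
    (h : ∀ b : B, ∀ a : A, ∀ U ∈ nhds a, ∃ V ∈ nhds b, ∃ W ∈ nhds a,
      ∀ f : B → A, Continuous f → f b ∈ W → ∀ v ∈ V, f v ∈ U) :
    IsClosed {f : B → A | Continuous f} := by
  rw [← closure_subset_iff_isClosed]
  exact fun g hg => closure_continuous_of_evenlyContinuous h g hg

lemma limit_nonempty {R : Type} [PartialOrder R] (hdir : IsDirected R (· ≤ ·))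
    (P : R → Type) [∀ r, TopologicalSpace (P r)] [∀ r, CompactSpace (P r)]
    [∀ r, T2Space (P r)]
    (K : ∀ r, Set (P r)) (hKc : ∀ r, IsClosed (K r)) (hKn : ∀ r, (K r).Nonempty)
    (F : ∀ ⦃r t : R⦄, t ≤ r → P r → P t) (hFc : ∀ (r t : R) (h : t ≤ r), Continuous (F h))
    (hFK : ∀ (r t : R) (h : t ≤ r), ∀ x ∈ K r, F h x ∈ K t)
    (hFid : ∀ (r : R) (x : P r), F (le_refl r) x = x)
    (hFcomp : ∀ (r t u : R) (h1 : u ≤ t) (h2 : t ≤ r) (x : P r),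
      F h1 (F h2 x) = F (h1.trans h2) x) :
    ∃ g : ∀ r, P r, (∀ r, g r ∈ K r) ∧ ∀ (r t : R) (h : t ≤ r), F h (g r) = g t := by
  rcases isEmpty_or_nonempty R with hR | hR
  · exact ⟨fun r => (hR.elim r), fun r => (hR.elim r), fun r => (hR.elim r)⟩
  classical
  set D : R → Set (∀ r, P r) := fun r =>
    {y | y r ∈ K r ∧ ∀ (t : R) (h : t ≤ r), F h (y r) = y t} with hD
  have hDsub : ∀ (r t : R), t ≤ r → D r ⊆ D t := by
    intro r t hle y hy
    constructor
    · rw [← hy.2 t hle]; exact hFK r t hle _ hy.1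
    · intro u hu
      rw [← hy.2 t hle, ← hy.2 u (hu.trans hle), hFcomp]
  have hclosed : ∀ r, IsClosed (D r) := by
    intro r
    have heq : D r = (fun y : ∀ r, P r => y r) ⁻¹' (K r) ∩
        ⋂ (t : R), ⋂ (h : t ≤ r), {y : ∀ r, P r | F h (y r) = y t} := by
      ext y
      simp only [hD, Set.mem_setOf_eq, Set.mem_inter_iff, Set.mem_preimage, Set.mem_iInter]
    rw [heq]
    refine IsClosed.inter ((hKc r).preimage (continuous_apply r)) ?_
    refine isClosed_iInter fun t => isClosed_iInter fun h => ?_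
    exact isClosed_eq ((hFc r t h).comp (continuous_apply r)) (continuous_apply t)
  have hne : ∀ r, (D r).Nonempty := by
    intro r
    obtain ⟨x, hx⟩ := hKn r
    refine ⟨fun t => if h : t ≤ r then F h x else (hKn t).choose, ?_, ?_⟩
    · simp only [dif_pos (le_refl r), hFid]; exact hx
    · intro t h
      simp only [dif_pos (le_refl r), dif_pos h, hFid]
  have hcompact : ∀ r, IsCompact (D r) := fun r => (hclosed r).isCompact
  have hdirected : Directed (fun x1 x2 : Set (∀ r, P r) => x1 ⊇ x2) D := by
    intro r t
    obtain ⟨u, hu1, hu2⟩ := hdir.directed r t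
    exact ⟨u, hDsub u r hu1, hDsub u t hu2⟩
  obtain ⟨y, hy⟩ := IsCompact.nonempty_iInter_of_directed_nonempty_isCompact_isClosed
    D hdirected hne hcompact hclosed
  simp only [Set.mem_iInter] at hy
  exact ⟨y, fun r => (hy r).1, fun r t h => (hy r).2 t h⟩

section equiv
variable {G A : Type} [Group G] [TopologicalSpace G] [AddCommGroup A]
    [TopologicalSpace A] [IsTopologicalAddGroup A]

lemma cohomologous_equiv (ac : G → A → A)
    (hdist : ∀ (s : G) (x y : A), ac s (x+y) = ac s x + ac s y) (m : ℕ) :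
    Equivalence (CohomologousN ac m) := by
  constructor
  · intro a
    exact ⟨fun _ => 0, continuous_const, fun s => by rw [dmap_zero ac hdist]; abel⟩
  · rintro a b ⟨f, hf, he⟩
    refine ⟨fun x => - f x, hf.neg, fun s => ?_⟩
    rw [dmap_neg ac hdist, he s]; abel
  · rintro a b c ⟨f, hf, he⟩ ⟨f', hf', he'⟩
    refine ⟨fun x => f x + f' x, hf.add hf', fun s => ?_⟩
    rw [dmap_add ac hdist, he' s, he s]; abel
end equiv

section t2q
variable {G B : Type} [Group G] [TopologicalSpace G] [AddCommGroup B]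
    [TopologicalSpace B] [DiscreteTopology B] [Finite B]

lemma t2_quot (ac : G → B → B)
    (hdist : ∀ (s : G) (x y : B), ac s (x+y) = ac s x + ac s y) (m : ℕ)
    (hec : EvenlyContinuousSet {f : (Fin m → G) → B | Continuous f}) :
    T2Space (Quot (CohomologousN ac m)) := by
  haveI : ContinuousAdd B := ⟨continuous_of_discreteTopology⟩
  haveI : ContinuousNeg B := ⟨continuous_of_discreteTopology⟩
  haveI : IsTopologicalAddGroup B := {}
  have heqv : Equivalence (CohomologousN ac m) := cohomologous_equiv ac hdist m
  set Dset : Set ((Fin (m+1) → G) → B) :=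
    {g | ∃ f : (Fin m → G) → B, Continuous f ∧ ∀ s, g s = dmap ac m f s} with hDset
  -- D is compact hence closed
  have hCc : IsClosed {f : (Fin m → G) → B | Continuous f} :=
    isClosed_cts fun b a U hU => by
      obtain ⟨V, hV, W, hW, h⟩ := hec b a U hU
      exact ⟨V, hV, W, hW, fun f hf => h f hf⟩
  have hDeq : Dset = (fun f => dmap ac m f) '' {f : (Fin m → G) → B | Continuous f} := by
    ext g
    constructor
    · rintro ⟨f, hf, he⟩; exact ⟨f, hf, (funext fun s => (he s).symm)⟩
    · rintro ⟨f, hf, rfl⟩; exact ⟨f, hf, fun s => rfl⟩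
  have hDcomp : IsCompact Dset := by
    rw [hDeq]
    exact (hCc.isCompact).image
      (continuous_pi fun s => dmap_eval_continuous ac (fun t => continuous_of_discreteTopology) m s)
  -- subgroup-like closure properties of Dset
  have hD0 : (fun _ => (0 : B)) ∈ Dset :=
    ⟨fun _ => 0, continuous_const, fun s => (dmap_zero ac hdist m s).symm⟩
  have hDadd : ∀ g1 ∈ Dset, ∀ g2 ∈ Dset, (fun s => g1 s + g2 s) ∈ Dset := by
    rintro g1 ⟨f1, hf1, he1⟩ g2 ⟨f2, hf2, he2⟩
    exact ⟨fun x => f1 x + f2 x, hf1.add hf2, fun s => by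
      rw [dmap_add ac hdist, ← he1 s, ← he2 s]⟩
  have hDsub : ∀ g1 ∈ Dset, ∀ g2 ∈ Dset, (fun s => g1 s - g2 s) ∈ Dset := by
    rintro g1 ⟨f1, hf1, he1⟩ g2 ⟨f2, hf2, he2⟩
    refine ⟨fun x => f1 x + - f2 x, hf1.add hf2.neg, fun s => ?_⟩
    show g1 s - g2 s = _
    rw [dmap_add ac hdist, dmap_neg ac hdist, ← he1 s, ← he2 s, sub_eq_add_neg]
  -- relation in terms of Dset
  have hrel : ∀ za zb : Zcts ac m,
      CohomologousN ac m za zb ↔ (fun s => zb.val s - za.val s) ∈ Dset := by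
    intro za zb
    constructor
    · rintro ⟨f, hf, he⟩
      exact ⟨f, hf, fun s => by show zb.val s - za.val s = _; rw [he s]; abel⟩
    · rintro ⟨f, hf, he⟩
      refine ⟨f, hf, fun s => ?_⟩
      have h2 : zb.val s - za.val s = dmap ac m f s := he s
      rw [← h2]; abel
  constructor
  intro x y hxy
  obtain ⟨za, rfl⟩ := Quot.exists_rep x
  obtain ⟨zb, rfl⟩ := Quot.exists_rep y
  have hc : (fun s => zb.val s - za.val s) ∉ Dset := by
    intro h
    exact hxy (Quot.sound ((hrel za zb).mpr h))
  -- find finite agreement set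
  have hDcl : IsClosed Dset := hDcomp.isClosed
  obtain ⟨F, u, hu, hsub⟩ := (isOpen_pi_iff.mp hDcl.isOpen_compl) _ hc
  set E : Set ((Fin (m+1) → G) → B) := {g | ∃ d ∈ Dset, ∀ s ∈ F, g s = d s} with hE
  have hcE : (fun s => zb.val s - za.val s) ∉ E := by
    rintro ⟨d, hd, hagree⟩
    refine hsub (fun s hs => ?_) hd
    rw [← hagree s hs]
    exact (hu s hs).2
  have hEopen : IsOpen E := by
    have : E = ⋃ d ∈ Dset, ⋂ s ∈ F, (fun g : (Fin (m+1) → G) → B => g s) ⁻¹' {d s} := by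
      ext g
      simp only [hE, Set.mem_setOf_eq, Set.mem_iUnion, Set.mem_iInter, Set.mem_preimage,
        Set.mem_singleton_iff, exists_prop]
    rw [this]
    exact isOpen_biUnion fun d _ => Set.Finite.isOpen_biInter F.finite_toSet
      (fun s _ => (continuous_apply s).isOpen_preimage _ (isOpen_discrete _))
  have hEadd : ∀ g ∈ E, ∀ δ ∈ Dset, (fun s => g s + δ s) ∈ E := by
    rintro g ⟨d, hd, ha⟩ δ hδ
    exact ⟨fun s => d s + δ s, hDadd d hd δ hδ, fun s hs => by
      show g s + δ s = d s + δ s; rw [ha s hs]⟩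
  have hEsub : ∀ g1 ∈ E, ∀ g2 ∈ E, (fun s => g1 s - g2 s) ∈ E := by
    rintro g1 ⟨d1, hd1, ha1⟩ g2 ⟨d2, hd2, ha2⟩
    exact ⟨fun s => d1 s - d2 s, hDsub d1 hd1 d2 hd2, fun s hs => by
      show g1 s - g2 s = d1 s - d2 s; rw [ha1 s hs, ha2 s hs]⟩
  set U1 : Set (Zcts ac m) := {z | (fun s => z.val s - za.val s) ∈ E} with hU1
  set U2 : Set (Zcts ac m) := {z | (fun s => z.val s - zb.val s) ∈ E} with hU2
  have hκ : ∀ w : Zcts ac m, Continuous fun z : Zcts ac m => (fun s => z.val s - w.val s) :=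
    fun w => continuous_pi fun s =>
      (continuous_of_discreteTopology (f := fun x : B => x - w.val s)).comp
        ((continuous_apply s).comp continuous_subtype_val)
  have hU1open : IsOpen U1 := hEopen.preimage (hκ za)
  have hU2open : IsOpen U2 := hEopen.preimage (hκ zb)
  have hsat : ∀ (w z z' : Zcts ac m), CohomologousN ac m z z' →
      ((fun s => z.val s - w.val s) ∈ E → (fun s => z'.val s - w.val s) ∈ E) := by
    rintro w z z' ⟨f, hf, he⟩ hz
    have hd : (fun s => dmap ac m f s) ∈ Dset := ⟨f, hf, fun s => rfl⟩
    have : (fun s => z'.val s - w.val s)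
        = fun s => (z.val s - w.val s) + dmap ac m f s := funext fun s => by rw [he s]; abel
    rw [this]
    exact hEadd _ hz _ hd
  have hdisj : ∀ z : Zcts ac m, z ∈ U1 → z ∈ U2 → False := by
    intro z h1 h2
    apply hcE
    have : (fun s => zb.val s - za.val s)
        = fun s => (z.val s - za.val s) - (z.val s - zb.val s) := funext fun s => by abel
    rw [this]
    exact hEsub _ h1 _ h2
  have hz0 : ∀ w : Zcts ac m, (fun s => w.val s - w.val s) ∈ E :=
    fun w => ⟨fun _ => 0, hD0, fun s _ => by simp⟩
  refine ⟨Quot.mk _ '' U1, Quot.mk _ '' U2, ?_, ?_, ⟨za, hz0 za, rfl⟩, ⟨zb, hz0 zb, rfl⟩, ?_⟩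
  · rw [isOpen_coinduced (f := Quot.mk (CohomologousN ac m))]
    have : Quot.mk (CohomologousN ac m) ⁻¹' (Quot.mk _ '' U1) = U1 := by
      ext z
      refine ⟨?_, fun hz => ⟨z, hz, rfl⟩⟩
      rintro ⟨z0, hz0', heq⟩
      have hr : CohomologousN ac m z0 z := (heqv.eqvGen_iff).mp (Quot.eq.mp heq)
      exact hsat za z0 z hr hz0'
    rw [this]; exact hU1open
  · rw [isOpen_coinduced (f := Quot.mk (CohomologousN ac m))]
    have : Quot.mk (CohomologousN ac m) ⁻¹' (Quot.mk _ '' U2) = U2 := by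
      ext z
      refine ⟨?_, fun hz => ⟨z, hz, rfl⟩⟩
      rintro ⟨z0, hz0', heq⟩
      have hr : CohomologousN ac m z0 z := (heqv.eqvGen_iff).mp (Quot.eq.mp heq)
      exact hsat zb z0 z hr hz0'
    rw [this]; exact hU2open
  · rw [Set.disjoint_left]
    rintro q ⟨z1, hz1, he1⟩ ⟨z2, hz2, he2⟩
    have hr : CohomologousN ac m z1 z2 :=
      (heqv.eqvGen_iff).mp (Quot.eq.mp (he1.trans he2.symm))
    exact hdisj z2 (hsat za z1 z2 hr hz1) hz2
end t2q
section part1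
variable {G : Type} [Group G] [TopologicalSpace G] [IsTopologicalGroup G]
    [CompactSpace G] [T2Space G] [TotallyDisconnectedSpace G]
    {A : Type} [AddCommGroup A] [TopologicalSpace A] [IsTopologicalAddGroup A]
    [T2Space A] [CompactSpace A] [TotallyDisconnectedSpace A]
    (ac : G → A → A)

lemma stableOpen_sub_nhds
    (hac : Continuous fun p : G × A => ac p.1 p.2)
    (hone : ∀ x : A, ac 1 x = x)
    (hcomp : ∀ (s t : G) (x : A), ac (s * t) x = ac s (ac t x))
    (hdist : ∀ (s : G) (x y : A), ac s (x + y) = ac s x + ac s y)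
    {N : Set A} (hN : N ∈ nhds 0) :
    ∃ U : AddSubgroup A, IsOpen (U : Set A) ∧ (∀ (s : G) (x : A), x ∈ U → ac s x ∈ U)
      ∧ (U : Set A) ⊆ N := by
  have h0 : ∀ t : G, ac t 0 = 0 := fun t => (AddMonoidHom.mk' (ac t) (hdist t)).map_zero
  have hneg : ∀ (t : G) (x : A), ac t (-x) = - ac t x :=
    fun t x => (AddMonoidHom.mk' (ac t) (hdist t)).map_neg x
  obtain ⟨O, hON, hOopen, hO0⟩ := mem_nhds_iff.mp hN
  obtain ⟨W, hWclopen, hW0, hWO⟩ := compact_exists_isClopen_in_isOpen hOopen hO0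
  obtain ⟨V, hV⟩ := IsTopologicalAddGroup.exist_openAddSubgroup_sub_clopen_nhds_of_zero hWclopen hW0
  -- tube lemma: find nbhd v of 0 with ac s x ∈ V for all s, x ∈ v
  have hWt : IsOpen ((fun p : G × A => ac p.1 p.2) ⁻¹' (V : Set A)) :=
    hac.isOpen_preimage _ V.isOpen
  have hsub : (Set.univ : Set G) ×ˢ ({0} : Set A) ⊆ (fun p : G × A => ac p.1 p.2) ⁻¹' V := by
    rintro ⟨s, x⟩ ⟨-, hx⟩
    simp only [Set.mem_singleton_iff] at hx
    subst hx
    simp only [Set.mem_preimage, h0 s]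
    exact V.zero_mem
  obtain ⟨u, v, huo, hvo, hu, hv', huv⟩ :=
    generalized_tube_lemma isCompact_univ isCompact_singleton hWt hsub
  have hacv : ∀ (s : G) (x : A), x ∈ v → ac s x ∈ V := by
    intro s x hx
    exact huv (Set.mk_mem_prod (hu (Set.mem_univ s)) hx)
  set U : AddSubgroup A :=
    { carrier := {x | ∀ s : G, ac s x ∈ V}
      zero_mem' := fun s => by rw [h0 s]; exact V.zero_mem
      add_mem' := fun hx hy s => by rw [hdist]; exact V.add_mem (hx s) (hy s)
      neg_mem' := fun hx s => by rw [hneg]; exact V.neg_mem (hx s) } with hU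
  have hUV : (U : Set A) ⊆ (V : Set A) := fun x hx => by
    have := hx 1; rwa [hone] at this
  have hvU : v ⊆ (U : Set A) := fun x hx s => hacv s x hx
  have hUnhds : (U : Set A) ∈ nhds 0 :=
    Filter.mem_of_superset (hvo.mem_nhds (hv' rfl)) hvU
  refine ⟨U, AddSubgroup.isOpen_of_mem_nhds U hUnhds, ?_, fun x hx => hON (hWO (hV (hUV hx)))⟩
  intro s x hx t
  rw [← hcomp]
  exact hx (t * s)

lemma stableOpen_separates
    (hac : Continuous fun p : G × A => ac p.1 p.2)
    (hone : ∀ x : A, ac 1 x = x)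
    (hcomp : ∀ (s t : G) (x : A), ac (s * t) x = ac s (ac t x))
    (hdist : ∀ (s : G) (x y : A), ac s (x + y) = ac s x + ac s y)
    {z : A} (hz : z ≠ 0) : ∃ U : StableOpen ac, z ∉ U.val := by
  have hN : ({z}ᶜ : Set A) ∈ nhds 0 :=
    (isOpen_compl_singleton).mem_nhds (by simp [hz.symm])
  obtain ⟨U, hUo, hUs, hUN⟩ := stableOpen_sub_nhds ac hac hone hcomp hdist hN
  exact ⟨⟨U, hUo, hUs⟩, fun h => hUN h rfl⟩
end part1

set_option linter.unusedSectionVars false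
section part1b
variable {G : Type} [Group G] [TopologicalSpace G] [IsTopologicalGroup G]
    [CompactSpace G] [T2Space G] [TotallyDisconnectedSpace G]
    {A : Type} [AddCommGroup A] [TopologicalSpace A] [IsTopologicalAddGroup A]
    [T2Space A] [CompactSpace A] [TotallyDisconnectedSpace A]
    (ac : G → A → A)

lemma quot_discrete (U : StableOpen ac) : DiscreteTopology (A ⧸ U.val) := by
  rw [discreteTopology_iff_isOpen_singleton]
  intro q
  obtain ⟨x, rfl⟩ := QuotientAddGroup.mk_surjective q
  rw [isOpen_coinduced (f := (QuotientAddGroup.mk : A → A ⧸ U.val))]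
  have : (QuotientAddGroup.mk : A → A ⧸ U.val) ⁻¹' {(QuotientAddGroup.mk x : A ⧸ U.val)}
      = (fun y : A => -y + x) ⁻¹' (U.val : Set A) := by
    ext y
    simp only [Set.mem_preimage, Set.mem_singleton_iff, SetLike.mem_coe]
    exact QuotientAddGroup.eq
  rw [this]
  exact U.2.1.preimage (continuous_neg.add continuous_const)

lemma quot_compact (U : StableOpen ac) : CompactSpace (A ⧸ U.val) := by
  constructor
  have : (Set.univ : Set (A ⧸ U.val)) = (QuotientAddGroup.mk : A → A ⧸ U.val) '' Set.univ := by
    rw [Set.image_univ, Set.range_eq_univ.mpr QuotientAddGroup.mk_surjective]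
  rw [this]
  exact isCompact_univ.image continuous_quotient_mk'

lemma quot_finite (U : StableOpen ac) : Finite (A ⧸ U.val) := by
  haveI := quot_discrete ac U
  haveI := quot_compact ac U
  exact finite_of_compact_of_discrete
end part1b

section part1c
variable {G : Type} [Group G] [TopologicalSpace G] [IsTopologicalGroup G]
    [CompactSpace G] [T2Space G] [TotallyDisconnectedSpace G]
    {A : Type} [AddCommGroup A] [TopologicalSpace A] [IsTopologicalAddGroup A]
    [T2Space A] [CompactSpace A] [TotallyDisconnectedSpace A]
    (ac : G → A → A)

lemma part1
    (hac : Continuous fun p : G × A => ac p.1 p.2)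
    (hone : ∀ x : A, ac 1 x = x)
    (hcomp : ∀ (s t : G) (x : A), ac (s * t) x = ac s (ac t x))
    (hdist : ∀ (s : G) (x y : A), ac s (x + y) = ac s x + ac s y) :
    ((∀ U : StableOpen ac, Finite (A ⧸ U.val) ∧ DiscreteTopology (A ⧸ U.val)) ∧
      (∀ U V : StableOpen ac, ∃ W : StableOpen ac, W.val ≤ U.val ∧ W.val ≤ V.val) ∧
      ∃ acq : ∀ U : StableOpen ac, G → A ⧸ U.val → A ⧸ U.val,
        (∀ (U : StableOpen ac) (s : G) (x : A),
          acq U s (QuotientAddGroup.mk x) = QuotientAddGroup.mk (ac s x)) ∧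
        (∀ U : StableOpen ac,
          Continuous (fun p : G × (A ⧸ U.val) => acq U p.1 p.2)) ∧
        (∀ (U : StableOpen ac) (s : G) (x y : A ⧸ U.val),
          acq U s (x + y) = acq U s x + acq U s y) ∧
        (∀ (U : StableOpen ac) (x : A ⧸ U.val), acq U 1 x = x) ∧
        (∀ (U : StableOpen ac) (s t : G) (x : A ⧸ U.val),
          acq U (s * t) x = acq U s (acq U t x)) ∧
        ∃ Φ : A → {h : ∀ U : StableOpen ac, A ⧸ U.val //
              ∀ U V : StableOpen ac, U.val ≤ V.val → ∀ x : A,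
                h U = QuotientAddGroup.mk x → h V = QuotientAddGroup.mk x},
          (∀ (x : A) (U : StableOpen ac), (Φ x).val U = QuotientAddGroup.mk x) ∧
          Function.Bijective Φ ∧ IsHomeomorph Φ ∧
          (∀ (x y : A) (U : StableOpen ac),
            (Φ (x + y)).val U = (Φ x).val U + (Φ y).val U) ∧
          (∀ (s : G) (x : A) (U : StableOpen ac),
            (Φ (ac s x)).val U = acq U s ((Φ x).val U))) := by
  refine ⟨fun U => ⟨quot_finite ac U, quot_discrete ac U⟩, ?_, ?_⟩
  · -- directedness
    intro U V
    refine ⟨⟨U.val ⊓ V.val, ?_, ?_⟩, inf_le_left, inf_le_right⟩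
    · have : ((U.val ⊓ V.val : AddSubgroup A) : Set A) = (U.val : Set A) ∩ V.val := rfl
      rw [this]
      exact U.2.1.inter V.2.1
    · intro s x hx
      rw [AddSubgroup.mem_inf] at hx ⊢
      exact ⟨U.2.2 s x hx.1, V.2.2 s x hx.2⟩
  -- the quotient actions
  set acq : ∀ U : StableOpen ac, G → A ⧸ U.val → A ⧸ U.val := fun U s =>
    QuotientAddGroup.map U.val U.val (AddMonoidHom.mk' (ac s) (hdist s))
      (fun x hx => U.2.2 s x hx) with hacq
  have acq_mk : ∀ (U : StableOpen ac) (s : G) (x : A),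
      acq U s (QuotientAddGroup.mk x) = QuotientAddGroup.mk (ac s x) :=
    fun U s x => QuotientAddGroup.map_mk _ _ _ _ x
  refine ⟨acq, acq_mk, ?_, ?_, ?_, ?_, ?_⟩
  · -- continuity of the quotient action
    intro U
    have hopen : IsOpenMap (Prod.map (id : G → G) (QuotientAddGroup.mk : A → A ⧸ U.val)) :=
      IsOpenMap.id.prodMap QuotientAddGroup.isOpenMap_coe
    have hsurj : Function.Surjective
        (Prod.map (id : G → G) (QuotientAddGroup.mk : A → A ⧸ U.val)) :=
      Function.Surjective.prodMap Function.surjective_id QuotientAddGroup.mk_surjective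
    have hq := hopen.isQuotientMap (continuous_id.prodMap continuous_quotient_mk') hsurj
    rw [hq.continuous_iff]
    have : ((fun p : G × (A ⧸ U.val) => acq U p.1 p.2) ∘
        Prod.map (id : G → G) (QuotientAddGroup.mk : A → A ⧸ U.val))
        = fun p : G × A => QuotientAddGroup.mk (ac p.1 p.2) := by
      funext p
      exact acq_mk U p.1 p.2
    rw [this]
    exact continuous_quotient_mk'.comp hac
  · intro U s x y
    exact map_add _ x y
  · intro U x
    refine QuotientAddGroup.induction_on x fun a => ?_
    rw [acq_mk, hone]
  · intro U s t x
    refine QuotientAddGroup.induction_on x fun a => ?_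
    rw [acq_mk, acq_mk, acq_mk, hcomp]
  -- the limit presentation
  haveI hdt : ∀ U : StableOpen ac, DiscreteTopology (A ⧸ U.val) := fun U => quot_discrete ac U
  haveI : ∀ U : StableOpen ac, T2Space (A ⧸ U.val) := fun U => DiscreteTopology.toT2Space
  set L := {h : ∀ U : StableOpen ac, A ⧸ U.val //
      ∀ U V : StableOpen ac, U.val ≤ V.val → ∀ x : A,
        h U = QuotientAddGroup.mk x → h V = QuotientAddGroup.mk x} with hL
  set Φ : A → L := fun x => ⟨fun U => QuotientAddGroup.mk x, by
    intro U V hUV y hy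
    have h1 : -x + y ∈ U.val := QuotientAddGroup.eq.mp hy
    exact QuotientAddGroup.eq.mpr (hUV h1)⟩ with hΦ
  have hΦval : ∀ (x : A) (U : StableOpen ac), (Φ x).val U = QuotientAddGroup.mk x :=
    fun x U => rfl
  have hinj : Function.Injective Φ := by
    intro x y hxy
    by_contra hne
    have hz : -x + y ≠ 0 := fun h => hne (by
      have := congrArg (x + ·) h
      simpa [add_assoc] using this.symm)
    obtain ⟨U, hU⟩ := stableOpen_separates ac hac hone hcomp hdist hz
    apply hU
    have : (Φ x).val U = (Φ y).val U := by rw [hxy]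
    exact QuotientAddGroup.eq.mp this
  have hsurjΦ : Function.Surjective Φ := by
    intro h
    set C : StableOpen ac → Set A := fun U =>
      (QuotientAddGroup.mk : A → A ⧸ U.val) ⁻¹' {h.val U} with hC
    have hCcl : ∀ U, IsClosed (C U) := fun U =>
      (isClosed_singleton).preimage continuous_quotient_mk'
    have hCne : ∀ U, (C U).Nonempty := fun U => by
      obtain ⟨x, hx⟩ := QuotientAddGroup.mk_surjective (h.val U)
      exact ⟨x, hx⟩
    have hCsub : ∀ (W U : StableOpen ac), W.val ≤ U.val → C W ⊆ C U := by
      intro W U hWU x hx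
      have := h.2 W U hWU x hx.symm
      exact this.symm
    haveI : Nonempty (StableOpen ac) := ⟨⟨⊤, by
      rw [AddSubgroup.coe_top]; exact isOpen_univ, fun s x _ => trivial⟩⟩
    have hdir : Directed (fun x1 x2 : Set A => x1 ⊇ x2) C := by
      intro U V
      refine ⟨⟨U.val ⊓ V.val, ?_, ?_⟩, ?_, ?_⟩
      · have : ((U.val ⊓ V.val : AddSubgroup A) : Set A) = (U.val : Set A) ∩ V.val := rfl
        rw [this]; exact U.2.1.inter V.2.1
      · intro s x hx
        rw [AddSubgroup.mem_inf] at hx ⊢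
        exact ⟨U.2.2 s x hx.1, V.2.2 s x hx.2⟩
      · exact hCsub _ U inf_le_left
      · exact hCsub _ V inf_le_right
    obtain ⟨x, hx⟩ := IsCompact.nonempty_iInter_of_directed_nonempty_isCompact_isClosed
      C hdir hCne (fun U => (hCcl U).isCompact) hCcl
    simp only [Set.mem_iInter] at hx
    exact ⟨x, Subtype.ext (funext fun U => (hx U))⟩
  have hbij : Function.Bijective Φ := ⟨hinj, hsurjΦ⟩
  have hcont : Continuous Φ :=
    Continuous.subtype_mk (continuous_pi fun U => continuous_quotient_mk') _
  have hhomeo : IsHomeomorph Φ := by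
    have h2 : Continuous (Equiv.ofBijective Φ hbij : A → L) := hcont
    exact (h2.homeoOfEquivCompactToT2).isHomeomorph
  refine ⟨Φ, hΦval, hbij, hhomeo, ?_, ?_⟩
  · intro x y U
    exact (QuotientAddGroup.mk' U.val).map_add x y
  · intro s x U
    exact (acq_mk U s x).symm
end part1c

section part2
set_option maxHeartbeats 1000000
variable {G : Type} [Group G] [TopologicalSpace G] [IsTopologicalGroup G]
    [CompactSpace G] [T2Space G] [TotallyDisconnectedSpace G]
    {A : Type} [AddCommGroup A] [TopologicalSpace A] [IsTopologicalAddGroup A]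
    [T2Space A] [CompactSpace A] [TotallyDisconnectedSpace A]

lemma part2 (ac : G → A → A)
    (hac : Continuous fun p : G × A => ac p.1 p.2)
    (hone : ∀ x : A, ac 1 x = x)
    (hcomp : ∀ (s t : G) (x : A), ac (s * t) x = ac s (ac t x))
    (hdist : ∀ (s : G) (x y : A), ac s (x + y) = ac s x + ac s y)
    (m : ℕ) (R : Type) (iPO : PartialOrder R) (hdirR : IsDirected R (· ≤ ·))
    (Br : R → Type) (iAG : ∀ r, AddCommGroup (Br r)) (iTS : ∀ r, TopologicalSpace (Br r))
    (iDT : ∀ r, DiscreteTopology (Br r)) (iFin : ∀ r, Finite (Br r))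
    (acr : ∀ r, G → Br r → Br r)
    (hacr : ∀ r, Continuous fun p : G × Br r => acr r p.1 p.2)
    (honer : ∀ r (x : Br r), acr r 1 x = x)
    (hcompr : ∀ r (s t : G) (x : Br r), acr r (s * t) x = acr r s (acr r t x))
    (hdistr : ∀ r (s : G) (x y : Br r), acr r s (x + y) = acr r s x + acr r s y)
    (ψ : ∀ ⦃r t : R⦄, t ≤ r → Br r → Br t)
    (hψc : ∀ (r t : R) (h : t ≤ r), Continuous (ψ h))
    (hψid : ∀ r : R, ψ (le_refl r) = id)
    (hψcomp : ∀ (r t u : R) (h1 : u ≤ t) (h2 : t ≤ r) (x : Br r),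
      ψ h1 (ψ h2 x) = ψ (h1.trans h2) x)
    (hψadd : ∀ (r t : R) (h : t ≤ r) (x y : Br r), ψ h (x + y) = ψ h x + ψ h y)
    (hψac : ∀ (r t : R) (h : t ≤ r) (s : G) (x : Br r),
      ψ h (acr r s x) = acr t s (ψ h x))
    (φp : ∀ r : R, A → Br r)
    (hφc : ∀ r, Continuous (φp r))
    (hφadd : ∀ r (x y : A), φp r (x + y) = φp r x + φp r y)
    (hφac : ∀ r (s : G) (x : A), φp r (ac s x) = acr r s (φp r x))
    (hψφ : ∀ (r t : R) (h : t ≤ r) (x : A), ψ h (φp r x) = φp t x)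
    (hlim : IsHomeomorph (fun x : A =>
      (⟨fun r => φp r x, fun r t h => hψφ r t h x⟩ :
        {y : ∀ r, Br r // ∀ (r t : R) (h : t ≤ r), ψ h (y r) = y t})))
    (hecBr : ∀ r, EvenlyContinuousSet {f : (Fin m → G) → Br r | Continuous f}) :
    ∃ Θ : Quot (CohomologousN ac m) →
        {h : ∀ r, Quot (CohomologousN (acr r) m) //
          ∀ (r t : R) (hle : t ≤ r) (b : Zcts (acr r) m),
            h r = Quot.mk _ b →
            ∃ c : Zcts (acr t) m, (∀ s, c.val s = ψ hle (b.val s)) ∧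
              h t = Quot.mk _ c},
      (∀ (a : Zcts ac m) (r : R), ∃ c : Zcts (acr r) m,
        (∀ s, c.val s = φp r (a.val s)) ∧
        (Θ (Quot.mk _ a)).val r = Quot.mk _ c) ∧
      Continuous Θ ∧
      Function.Bijective Θ ∧
      (EvenlyContinuousSet {f : (Fin (m + 1) → G) → A | Continuous f} →
        IsHomeomorph Θ) := by
  classical
  haveI : ∀ r, ContinuousAdd (Br r) := fun r => ⟨continuous_of_discreteTopology⟩
  haveI : ∀ r, ContinuousNeg (Br r) := fun r => ⟨continuous_of_discreteTopology⟩
  haveI : ∀ r, IsTopologicalAddGroup (Br r) := fun r => {}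
  have hacs : ∀ t : G, Continuous (ac t) :=
    fun t => hac.comp (Continuous.prodMk_right t)
  have hacrs : ∀ r (t : G), Continuous (acr r t) := fun r t => continuous_of_discreteTopology
  have heqv : Equivalence (CohomologousN ac m) := cohomologous_equiv ac hdist m
  have heqvr : ∀ r, Equivalence (CohomologousN (acr r) m) :=
    fun r => cohomologous_equiv (acr r) (hdistr r) m
  -- homomorphism packages
  set φh : ∀ r : R, A →+ Br r := fun r => AddMonoidHom.mk' (φp r) (hφadd r) with hφh
  set ψh : ∀ ⦃r t : R⦄, t ≤ r → (Br r →+ Br t) :=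
    fun r t h => AddMonoidHom.mk' (ψ h) (hψadd r t h) with hψh
  -- pushforward of cocycles along φp r
  have hpushφ : ∀ (r : R) (a : Zcts ac m),
      Continuous (fun s => φp r (a.val s)) ∧
      ∀ s, dmap (acr r) (m+1) (fun s => φp r (a.val s)) s = 0 := by
    intro r a
    constructor
    · exact (hφc r).comp a.2.1
    · intro s
      rw [← dmap_comm_fun ac (acr r) (φp r) (hφadd r) (fun t x => hφac r t x) (m+1) a.val s,
        a.2.2 s]
      exact (φh r).map_zero
  set pushφ : ∀ r : R, Zcts ac m → Zcts (acr r) m := fun r a =>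
    ⟨fun s => φp r (a.val s), (hpushφ r a).1, (hpushφ r a).2⟩ with hpushφdef
  -- pushforward of cocycles along ψ
  have hpushψ : ∀ (r t : R) (h : t ≤ r) (b : Zcts (acr r) m),
      Continuous (fun s => ψ h (b.val s)) ∧
      ∀ s, dmap (acr t) (m+1) (fun s => ψ h (b.val s)) s = 0 := by
    intro r t h b
    constructor
    · exact (hψc r t h).comp b.2.1
    · intro s
      rw [← dmap_comm_fun (acr r) (acr t) (ψ h) (hψadd r t h) (fun u x => hψac r t h u x) (m+1) b.val s,
        b.2.2 s]
      exact (ψh h).map_zero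
  set pushψ : ∀ ⦃r t : R⦄ (h : t ≤ r), Zcts (acr r) m → Zcts (acr t) m := fun r t h b =>
    ⟨fun s => ψ h (b.val s), (hpushψ r t h b).1, (hpushψ r t h b).2⟩ with hpushψdef
  -- relation transport
  have hrelφ : ∀ (r : R) (a b : Zcts ac m), CohomologousN ac m a b →
      CohomologousN (acr r) m (pushφ r a) (pushφ r b) := by
    rintro r a b ⟨f, hf, he⟩
    refine ⟨fun x => φp r (f x), (hφc r).comp hf, fun s => ?_⟩
    show φp r (b.val s) = φp r (a.val s) + _
    rw [he s, hφadd, dmap_comm_fun ac (acr r) (φp r) (hφadd r) (fun t x => hφac r t x) m f s]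
  have hrelψ : ∀ (r t : R) (h : t ≤ r) (a b : Zcts (acr r) m),
      CohomologousN (acr r) m a b →
      CohomologousN (acr t) m (pushψ h a) (pushψ h b) := by
    rintro r t h a b ⟨f, hf, he⟩
    refine ⟨fun x => ψ h (f x), (hψc r t h).comp hf, fun s => ?_⟩
    show ψ h (b.val s) = ψ h (a.val s) + _
    rw [he s, hψadd, dmap_comm_fun (acr r) (acr t) (ψ h) (hψadd r t h) (fun u x => hψac r t h u x) m f s]
  have hψφpush : ∀ (r t : R) (h : t ≤ r) (a : Zcts ac m),
      pushψ h (pushφ r a) = pushφ t a :=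
    fun r t h a => Subtype.ext (funext fun s => hψφ r t h (a.val s))
  -- definition of Θ
  set Θfun : Zcts ac m → {h : ∀ r, Quot (CohomologousN (acr r) m) //
      ∀ (r t : R) (hle : t ≤ r) (b : Zcts (acr r) m),
        h r = Quot.mk _ b →
        ∃ c : Zcts (acr t) m, (∀ s, c.val s = ψ hle (b.val s)) ∧
          h t = Quot.mk _ c} := fun a =>
    ⟨fun r => Quot.mk _ (pushφ r a), by
      intro r t hle b hb
      refine ⟨pushψ hle b, fun s => rfl, ?_⟩
      have hr : CohomologousN (acr r) m (pushφ r a) b :=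
        ((heqvr r).eqvGen_iff).mp (Quot.eq.mp hb)
      have : CohomologousN (acr t) m (pushφ t a) (pushψ hle b) := by
        rw [← hψφpush r t hle a]
        exact hrelψ r t hle _ _ hr
      exact Quot.sound this⟩ with hΘfun
  set Θ := Quot.lift Θfun (fun a b hab =>
    Subtype.ext (funext fun r => Quot.sound (hrelφ r a b hab))) with hΘ
  have hpushφcont : ∀ r : R, Continuous (pushφ r) := by
    intro r
    apply Continuous.subtype_mk
    exact continuous_pi fun s => (hφc r).comp ((continuous_apply s).comp continuous_subtype_val)
  have hΘcont : Continuous Θ := by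
    apply continuous_quot_lift
    apply Continuous.subtype_mk
    exact continuous_pi fun r => continuous_quot_mk.comp (hpushφcont r)
  have hΘval : ∀ (a : Zcts ac m) (r : R),
      (Θ (Quot.mk (CohomologousN ac m) a)).val r = Quot.mk _ (pushφ r a) := by
    intro a r
    rw [hΘ]
  -- separation by the φp r
  have hsep : ∀ x y : A, (∀ r, φp r x = φp r y) → x = y := by
    intro x y hxy
    have := hlim.bijective.injective (a₁ := x) (a₂ := y) (Subtype.ext (funext fun r => hxy r))
    exact this
  -- closedness of the sets of continuous maps G^m → Br r
  have hCcl : ∀ r, IsClosed {f : (Fin m → G) → Br r | Continuous f} := by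
    intro r
    refine isClosed_cts fun b a U hU => ?_
    obtain ⟨V, hV, W, hW, h⟩ := hecBr r b a U hU
    exact ⟨V, hV, W, hW, fun f hf => h f hf⟩
  -- the inverse-limit homeomorphism
  set e := hlim.homeomorph _ with he
  have hekey : ∀ z : {y : ∀ r, Br r // ∀ (r t : R) (h : t ≤ r), ψ h (y r) = y t},
      ∀ r, φp r (e.symm z) = z.val r := by
    intro z r
    have h1 : e (e.symm z) = z := e.apply_symm_apply z
    have h2 : (e (e.symm z)).val r = z.val r := by rw [h1]
    exact h2
  have hψ0 : ∀ (r t : R) (hle : t ≤ r), ψ hle 0 = 0 :=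
    fun r t hle => (AddMonoidHom.mk' (ψ hle) (hψadd r t hle)).map_zero
  have hφ0 : ∀ r : R, φp r (0 : A) = 0 :=
    fun r => (AddMonoidHom.mk' (φp r) (hφadd r)).map_zero
  have hbijΘ : Function.Bijective Θ := by
    constructor
    · -- injectivity
      intro qa qb hq
      obtain ⟨a, rfl⟩ := Quot.exists_rep qa
      obtain ⟨b, rfl⟩ := Quot.exists_rep qb
      have hr : ∀ r, CohomologousN (acr r) m (pushφ r a) (pushφ r b) := by
        intro r
        have hval : Quot.mk (CohomologousN (acr r) m) (pushφ r a)
            = Quot.mk (CohomologousN (acr r) m) (pushφ r b) := by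
          rw [← hΘval a r, ← hΘval b r, hq]
        exact ((heqvr r).eqvGen_iff).mp (Quot.eq.mp hval)
      set K : ∀ r, Set ((Fin m → G) → Br r) := fun r =>
        {f | Continuous f ∧
          ∀ s, φp r (b.val s) = φp r (a.val s) + dmap (acr r) m f s} with hK
      have hKcl : ∀ r, IsClosed (K r) := by
        intro r
        have heq : K r = {f : (Fin m → G) → Br r | Continuous f} ∩
            ⋂ s, {f : (Fin m → G) → Br r |
              φp r (b.val s) = φp r (a.val s) + dmap (acr r) m f s} := by
          ext f
          simp only [hK, Set.mem_setOf_eq, Set.mem_inter_iff, Set.mem_iInter]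
        rw [heq]
        exact (hCcl r).inter (isClosed_iInter fun s => isClosed_eq continuous_const
          (continuous_const.add (dmap_eval_continuous (acr r) (hacrs r) m s)))
      have hKne : ∀ r, (K r).Nonempty := by
        intro r
        obtain ⟨f, hf, hfe⟩ := hr r
        exact ⟨f, hf, fun s => hfe s⟩
      obtain ⟨g, hgK, hgcomp⟩ := limit_nonempty hdirR (fun r => (Fin m → G) → Br r)
        K hKcl hKne (fun r t hle f => fun x => ψ hle (f x))
        (fun r t hle => continuous_pi fun x => (hψc r t hle).comp (continuous_apply x))
        (by
          rintro r t hle f ⟨hfc, hfe⟩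
          refine ⟨(hψc r t hle).comp hfc, fun s => ?_⟩
          have h1 := congrArg (ψ hle) (hfe s)
          rw [hψφ] at h1
          rw [h1, hψadd, hψφ,
            dmap_comm_fun (acr r) (acr t) (ψ hle) (hψadd r t hle)
              (fun u x => hψac r t hle u x) m f s])
        (fun r f => funext fun x => congrFun (hψid r) (f x))
        (fun r t u h1 h2 f => funext fun x => hψcomp r t u h1 h2 (f x))
      set f : (Fin m → G) → A := fun x =>
        e.symm ⟨fun r => g r x, fun r t hle => congrFun (hgcomp r t hle) x⟩ with hfdef
      have hfφ : ∀ x r, φp r (f x) = g r x := by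
        intro x r
        exact hekey ⟨fun r => g r x, fun r t hle => congrFun (hgcomp r t hle) x⟩ r
      have hfc : Continuous f :=
        e.symm.continuous.comp (Continuous.subtype_mk
          (continuous_pi fun r => (hgK r).1) _)
      refine Quot.sound ⟨f, hfc, fun s => hsep _ _ fun r => ?_⟩
      rw [hφadd,
        dmap_comm_fun ac (acr r) (φp r) (hφadd r) (fun t x => hφac r t x) m f s]
      have h1 : (fun x => φp r (f x)) = g r := funext fun x => hfφ x r
      rw [h1]
      exact (hgK r).2 s
    · -- surjectivity
      intro h
      set b0 : ∀ r, Zcts (acr r) m := fun r => (Quot.exists_rep (h.val r)).choose with hb0def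
      have hb0 : ∀ r, Quot.mk _ (b0 r) = h.val r :=
        fun r => (Quot.exists_rep (h.val r)).choose_spec
      set K : ∀ r, Set ((Fin (m+1) → G) → Br r) := fun r =>
        {g | ∃ f : (Fin m → G) → Br r, Continuous f ∧
            ∀ s, g s = (b0 r).val s + dmap (acr r) m f s} ∩
          {g | ∀ s, dmap (acr r) (m+1) g s = 0} with hK
      have himg : ∀ r, {g : (Fin (m+1) → G) → Br r | ∃ f : (Fin m → G) → Br r, Continuous f ∧
          ∀ s, g s = (b0 r).val s + dmap (acr r) m f s}
          = (fun f : (Fin m → G) → Br r =>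
              (fun s => (b0 r).val s + dmap (acr r) m f s)) ''
            {f : (Fin m → G) → Br r | Continuous f} := by
        intro r
        ext g
        constructor
        · rintro ⟨f, hf, hfe⟩
          exact ⟨f, hf, (funext fun s => (hfe s).symm)⟩
        · rintro ⟨f, hf, rfl⟩
          exact ⟨f, hf, fun s => rfl⟩
      have hKcl : ∀ r, IsClosed (K r) := by
        intro r
        refine IsClosed.inter ?_ ?_
        · rw [himg r]
          exact (((hCcl r).isCompact).image (continuous_pi fun s =>
            continuous_const.add (dmap_eval_continuous (acr r) (hacrs r) m s))).isClosed
        · rw [Set.setOf_forall]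
          exact isClosed_iInter fun s =>
            isClosed_eq (dmap_eval_continuous (acr r) (hacrs r) (m+1) s) continuous_const
      have hKne : ∀ r, (K r).Nonempty := by
        intro r
        refine ⟨(b0 r).val, ⟨fun _ => 0, continuous_const, fun s => ?_⟩, (b0 r).2.2⟩
        rw [dmap_zero (acr r) (hdistr r), add_zero]
      obtain ⟨g, hgK, hgcomp⟩ := limit_nonempty hdirR (fun r => (Fin (m+1) → G) → Br r)
        K hKcl hKne (fun r t hle g => fun x => ψ hle (g x))
        (fun r t hle => continuous_pi fun x => (hψc r t hle).comp (continuous_apply x))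
        (by
          rintro r t hle g ⟨⟨f, hf, hfe⟩, hcoc⟩
          obtain ⟨c, hc, hct⟩ := h.2 r t hle (b0 r) (hb0 r).symm
          have hrel : CohomologousN (acr t) m (b0 t) c :=
            ((heqvr t).eqvGen_iff).mp (Quot.eq.mp ((hb0 t).trans hct))
          obtain ⟨f', hf', hfe'⟩ := hrel
          constructor
          · refine ⟨fun x => f' x + ψ hle (f x), hf'.add ((hψc r t hle).comp hf),
              fun s => ?_⟩
            rw [dmap_add (acr t) (hdistr t), ← add_assoc, ← hfe' s, hc s,
              ← dmap_comm_fun (acr r) (acr t) (ψ hle) (hψadd r t hle)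
                (fun u x => hψac r t hle u x) m f s,
              ← hψadd, ← hfe s]
          · intro s
            rw [← dmap_comm_fun (acr r) (acr t) (ψ hle) (hψadd r t hle)
              (fun u x => hψac r t hle u x) (m+1) g s, hcoc s, hψ0])
        (fun r g => funext fun x => congrFun (hψid r) (g x))
        (fun r t u h1 h2 g => funext fun x => hψcomp r t u h1 h2 (g x))
      have hgc : ∀ r, Continuous (g r) := by
        intro r
        obtain ⟨⟨f, hf, hfe⟩, -⟩ := hgK r
        have : g r = fun s => (b0 r).val s + dmap (acr r) m f s := funext fun s => hfe s
        rw [this]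
        exact (b0 r).2.1.add (dmap_continuous (acr r) (hacr r) m f hf)
      set a0 : (Fin (m+1) → G) → A := fun s =>
        e.symm ⟨fun r => g r s, fun r t hle => congrFun (hgcomp r t hle) s⟩ with ha0def
      have ha0φ : ∀ s r, φp r (a0 s) = g r s := by
        intro s r
        exact hekey ⟨fun r => g r s, fun r t hle => congrFun (hgcomp r t hle) s⟩ r
      have ha0c : Continuous a0 :=
        e.symm.continuous.comp (Continuous.subtype_mk
          (continuous_pi fun r => hgc r) _)
      have ha0coc : ∀ s, dmap ac (m+1) a0 s = 0 := by
        intro s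
        refine hsep _ _ fun r => ?_
        rw [hφ0 r,
          dmap_comm_fun ac (acr r) (φp r) (hφadd r) (fun t x => hφac r t x) (m+1) a0 s]
        have h1 : (fun x => φp r (a0 x)) = g r := funext fun x => ha0φ x r
        rw [h1]
        exact (hgK r).2 s
      refine ⟨Quot.mk _ ⟨a0, ha0c, ha0coc⟩, ?_⟩
      apply Subtype.ext
      funext r
      rw [hΘval ⟨a0, ha0c, ha0coc⟩ r]
      have hrel : CohomologousN (acr r) m (b0 r) (pushφ r ⟨a0, ha0c, ha0coc⟩) := by
        obtain ⟨⟨f, hf, hfe⟩, -⟩ := hgK r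
        exact ⟨f, hf, fun s => by
          show φp r (a0 s) = _
          rw [ha0φ s r]; exact hfe s⟩
      rw [← Quot.sound hrel, hb0 r]
  -- conclusion
  refine ⟨Θ, fun a r => ⟨pushφ r a, fun s => rfl, hΘval a r⟩, hΘcont, hbijΘ, ?_⟩
  intro hecA
  haveI : ∀ r, T2Space (Quot (CohomologousN (acr r) m)) :=
    fun r => t2_quot (acr r) (hdistr r) m (hecBr r)
  have hZcl : IsClosed {a : (Fin (m+1) → G) → A | Continuous a ∧ ∀ s, dmap ac (m+1) a s = 0} := by
    rw [Set.setOf_and]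
    refine IsClosed.inter ?_ ?_
    · refine isClosed_cts fun b x U hU => ?_
      obtain ⟨V, hV, W, hW, hh⟩ := hecA b x U hU
      exact ⟨V, hV, W, hW, fun f hf => hh f hf⟩
    · rw [Set.setOf_forall]
      exact isClosed_iInter fun s =>
        isClosed_eq (dmap_eval_continuous ac hacs (m+1) s) continuous_const
  haveI : CompactSpace (Zcts ac m) := isCompact_iff_compactSpace.mp hZcl.isCompact
  haveI : CompactSpace (Quot (CohomologousN ac m)) := by
    constructor
    have : (Set.univ : Set (Quot (CohomologousN ac m)))
        = Set.range (Quot.mk (CohomologousN ac m)) :=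
      (Set.range_eq_univ.mpr fun q => Quot.exists_rep q).symm
    rw [this]
    exact isCompact_range continuous_quot_mk
  have h2 : Continuous (Equiv.ofBijective Θ hbijΘ : Quot (CohomologousN ac m) → _) := hΘcont
  exact (h2.homeoOfEquivCompactToT2).isHomeomorph
end part2

/-- Let `G` be a profinite group and `A` a profinite `G`-module.  Then
`A` admits a presentation as the inverse limit, over a directed poset, of finite
discrete `G`-modules (realized by the quotients `A/U` by open `G`-stable subgroups
`U`, directed by reverse inclusion).  Moreover, for any such presentation
`A ≅ lim_r A_r` and any `n = m+1 ≥ 1`, if each `A_r` is evenly continuous with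
respect to `G^{n-1}`, then `Θ_n : H^n_cts(G,A)_po → lim_r H^n_cts(G,A_r)_po`,
`[a] ↦ ([φ_r ∘ a])_r`, is a continuous bijection; it is a homeomorphism if `A` is
evenly continuous with respect to `G^n`. -/
theorem stmt_19
    {G : Type} [Group G] [TopologicalSpace G] [IsTopologicalGroup G]
    [CompactSpace G] [T2Space G] [TotallyDisconnectedSpace G]
    {A : Type} [AddCommGroup A] [TopologicalSpace A] [IsTopologicalAddGroup A]
    [T2Space A] [CompactSpace A] [TotallyDisconnectedSpace A]
    (ac : G → A → A)
    (hac : Continuous fun p : G × A => ac p.1 p.2)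
    (hone : ∀ x : A, ac 1 x = x)
    (hcomp : ∀ (s t : G) (x : A), ac (s * t) x = ac s (ac t x))
    (hdist : ∀ (s : G) (x y : A), ac s (x + y) = ac s x + ac s y) :
    -- Part 1: `A` is an inverse limit of finite discrete `G`-modules: the open
    -- `G`-stable subgroups give such a presentation.
    ((∀ U : StableOpen ac, Finite (A ⧸ U.val) ∧ DiscreteTopology (A ⧸ U.val)) ∧
      -- the index set is directed (by reverse inclusion)
      (∀ U V : StableOpen ac, ∃ W : StableOpen ac, W.val ≤ U.val ∧ W.val ≤ V.val) ∧
      -- the quotients carry the induced `G`-module structure and the natural map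
      -- `A → lim_U A/U` is an isomorphism of topological groups commuting with the
      -- `G`-actions
      ∃ acq : ∀ U : StableOpen ac, G → A ⧸ U.val → A ⧸ U.val,
        (∀ (U : StableOpen ac) (s : G) (x : A),
          acq U s (QuotientAddGroup.mk x) = QuotientAddGroup.mk (ac s x)) ∧
        (∀ U : StableOpen ac,
          Continuous (fun p : G × (A ⧸ U.val) => acq U p.1 p.2)) ∧
        (∀ (U : StableOpen ac) (s : G) (x y : A ⧸ U.val),
          acq U s (x + y) = acq U s x + acq U s y) ∧
        (∀ (U : StableOpen ac) (x : A ⧸ U.val), acq U 1 x = x) ∧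
        (∀ (U : StableOpen ac) (s t : G) (x : A ⧸ U.val),
          acq U (s * t) x = acq U s (acq U t x)) ∧
        ∃ Φ : A → {h : ∀ U : StableOpen ac, A ⧸ U.val //
              ∀ U V : StableOpen ac, U.val ≤ V.val → ∀ x : A,
                h U = QuotientAddGroup.mk x → h V = QuotientAddGroup.mk x},
          (∀ (x : A) (U : StableOpen ac), (Φ x).val U = QuotientAddGroup.mk x) ∧
          Function.Bijective Φ ∧ IsHomeomorph Φ ∧
          (∀ (x y : A) (U : StableOpen ac),
            (Φ (x + y)).val U = (Φ x).val U + (Φ y).val U) ∧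
          (∀ (s : G) (x : A) (U : StableOpen ac),
            (Φ (ac s x)).val U = acq U s ((Φ x).val U))) ∧
    -- Part 2: for any presentation of `A` as an inverse limit of finite discrete
    -- `G`-modules and any `n = m+1 ≥ 1`, the map `Θ_n` is a continuous bijection,
    -- and a homeomorphism when `A` is evenly continuous with respect to `G^n`.
    (∀ (m : ℕ) (R : Type) (_ : PartialOrder R), IsDirected R (· ≤ ·) →
      ∀ (Br : R → Type) (_ : ∀ r, AddCommGroup (Br r))
        (_ : ∀ r, TopologicalSpace (Br r)) (_ : ∀ r, DiscreteTopology (Br r))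
        (_ : ∀ r, Finite (Br r))
        (acr : ∀ r, G → Br r → Br r),
        (∀ r, Continuous fun p : G × Br r => acr r p.1 p.2) →
        (∀ r (x : Br r), acr r 1 x = x) →
        (∀ r (s t : G) (x : Br r), acr r (s * t) x = acr r s (acr r t x)) →
        (∀ r (s : G) (x y : Br r), acr r s (x + y) = acr r s x + acr r s y) →
        ∀ ψ : ∀ ⦃r t : R⦄, t ≤ r → Br r → Br t,
        (∀ (r t : R) (h : t ≤ r), Continuous (ψ h)) →
        (∀ r : R, ψ (le_refl r) = id) →
        (∀ (r t u : R) (h1 : u ≤ t) (h2 : t ≤ r) (x : Br r),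
          ψ h1 (ψ h2 x) = ψ (h1.trans h2) x) →
        (∀ (r t : R) (h : t ≤ r) (x y : Br r), ψ h (x + y) = ψ h x + ψ h y) →
        (∀ (r t : R) (h : t ≤ r) (s : G) (x : Br r),
          ψ h (acr r s x) = acr t s (ψ h x)) →
        -- the projections `φ_r : A → A_r` of the presentation
        ∀ φp : ∀ r : R, A → Br r,
        (∀ r, Continuous (φp r)) →
        (∀ r (x y : A), φp r (x + y) = φp r x + φp r y) →
        (∀ r (s : G) (x : A), φp r (ac s x) = acr r s (φp r x)) →
        ∀ hψφ : ∀ (r t : R) (h : t ≤ r) (x : A), ψ h (φp r x) = φp t x,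
        -- `A ≅ lim_r A_r` via the projections
        IsHomeomorph (fun x : A =>
          (⟨fun r => φp r x, fun r t h => hψφ r t h x⟩ :
            {y : ∀ r, Br r // ∀ (r t : R) (h : t ≤ r), ψ h (y r) = y t})) →
        -- each `A_r` is evenly continuous with respect to `G^{n-1}`
        (∀ r, EvenlyContinuousSet {f : (Fin m → G) → Br r | Continuous f}) →
        ∃ Θ : Quot (CohomologousN ac m) →
            {h : ∀ r, Quot (CohomologousN (acr r) m) //
              ∀ (r t : R) (hle : t ≤ r) (b : Zcts (acr r) m),
                h r = Quot.mk _ b →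
                ∃ c : Zcts (acr t) m, (∀ s, c.val s = ψ hle (b.val s)) ∧
                  h t = Quot.mk _ c},
          -- `Θ_n` is given by `[a] ↦ ([φ_r ∘ a])_r`
          (∀ (a : Zcts ac m) (r : R), ∃ c : Zcts (acr r) m,
            (∀ s, c.val s = φp r (a.val s)) ∧
            (Θ (Quot.mk _ a)).val r = Quot.mk _ c) ∧
          Continuous Θ ∧
          Function.Bijective Θ ∧
          (EvenlyContinuousSet {f : (Fin (m + 1) → G) → A | Continuous f} →
            IsHomeomorph Θ)) := by
  refine ⟨part1 ac hac hone hcomp hdist, ?_⟩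
  intro m R iPO hdirR Br iAG iTS iDT iFin acr hacr honer hcompr hdistr ψ hψc hψid
    hψcomp hψadd hψac φp hφc hφadd hφac hψφ hlim hecBr
  exact part2 ac hac hone hcomp hdist m R iPO hdirR Br iAG iTS iDT iFin acr hacr honer
    hcompr hdistr ψ hψc hψid hψcomp hψadd hψac φp hφc hφadd hφac hψφ hlim hecBr
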